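/- For every integer n ≥ 2, the number of complete basis partitions of n with even signature equals the number of complete basis partitions of n with odd signature; in particular, b_c(n) is even for all n ≥ 2. -/

import Mathlib

open Finset
open scoped Classical

namespace BasisPartitions

/-! ### Ordinary partitions -/

/-- The parts of a partition, listed in weakly decreasing order. -/
def sparts {n : ℕ} (π : n.Partition) : List ℕ := π.parts.sort (· ≥ ·)

/-- `conj L j` is the number of parts that are `≥ j`, i.e. the `j`-th part of the
conjugate partition (for `j ≥ 1`). -/
def conj (L : List ℕ) (j : ℕ) : ℕ := L.countP (fun b => j ≤ b)

/-- The Durfee square size: the largest `k` such that the `k`-th part is `≥ k`. -/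
def durfee (L : List ℕ) : ℕ := (List.range L.length).countP (fun i => i + 1 ≤ L.getD i 0)

/-- The `(i+1)`-st successive rank `r_{i+1} = b_{i+1} - c_{i+1}` (0-indexed `i`). -/
def rank (L : List ℕ) (i : ℕ) : ℤ := (L.getD i 0 : ℤ) - (conj L (i + 1) : ℤ)

/-- The successive rank vector `(r_1, ..., r_k)` where `k` is the Durfee square size. -/
def ranks (L : List ℕ) : List ℤ := (List.range (durfee L)).map (rank L)

/-- A basis partition: the partitioned number is minimal among all partitions having
the same successive rank vector. -/
def IsBasis {n : ℕ} (π : n.Partition) : Prop :=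
  ∀ (m : ℕ) (π' : m.Partition), ranks (sparts π') = ranks (sparts π) → n ≤ m

/-- The signature: the number of distinct part sizes below the Durfee square. -/
def sig (L : List ℕ) : ℕ := ((L.drop (durfee L)).dedup).length

/-- `b(n;k)`: the number of basis partitions of `n` with Durfee square size `k`. -/
noncomputable def bCount (n k : ℕ) : ℕ :=
  Nat.card {π : n.Partition // IsBasis π ∧ durfee (sparts π) = k}

/-- `b(n,k,s)`: the number of basis partitions of `n` with Durfee square size `k`
and signature `s`. -/
noncomputable def bCount3 (n k s : ℕ) : ℕ :=
  Nat.card {π : n.Partition // IsBasis π ∧ durfee (sparts π) = k ∧ sig (sparts π) = s}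

/-- `B(n;j)`: the number of basis partitions of `n` with signature `j`. -/
noncomputable def BCount (n j : ℕ) : ℕ :=
  Nat.card {π : n.Partition // IsBasis π ∧ sig (sparts π) = j}

/-- Rogers–Ramanujan condition: exactly `k` parts, consecutive gaps `≥ 2`, last part `≥ 1`. -/
def RR (L : List ℕ) (k : ℕ) : Prop :=
  L.length = k ∧ (∀ i, i + 1 < k → L.getD (i + 1) 0 + 2 ≤ L.getD i 0) ∧ 1 ≤ L.getD (k - 1) 0

/-- `t(π)` for a Rogers–Ramanujan partition: the number of gaps `> 2`, plus 1 if the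
last part is `> 1`. -/
def tRR (L : List ℕ) (k : ℕ) : ℕ :=
  ((Finset.range (k - 1)).filter (fun i => L.getD (i + 1) 0 + 2 < L.getD i 0)).card +
    (if 1 < L.getD (k - 1) 0 then 1 else 0)

/-- Primary condition: exactly `k` parts, each part `≥ k`. -/
def Primary (L : List ℕ) (k : ℕ) : Prop := L.length = k ∧ ∀ x ∈ L, k ≤ x

/-- `t(π)` for a primary partition: the number of strict descents, plus 1 if the
last part is `> k`. -/
def tP (L : List ℕ) (k : ℕ) : ℕ :=
  ((Finset.range (k - 1)).filter (fun i => L.getD (i + 1) 0 < L.getD i 0)).card +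
    (if k < L.getD (k - 1) 0 then 1 else 0)

/-- A complete basis partition: every `j` with `1 ≤ j ≤ k-1` occurs as a part of `π_b`
(a row below the Durfee square) or as a part of `π_r` (a column length strictly to the
right of the Durfee square). -/
def IsComplete {n : ℕ} (π : n.Partition) : Prop :=
  ∀ j : ℕ, 1 ≤ j → j < durfee (sparts π) →
    j ∈ (sparts π).drop (durfee (sparts π)) ∨
      ∃ c : ℕ, durfee (sparts π) < c ∧ conj (sparts π) c = j

/-- `b_c(n)`: the number of complete basis partitions of `n`. -/
noncomputable def bc (n : ℕ) : ℕ := Nat.card {π : n.Partition // IsBasis π ∧ IsComplete π}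

/-! ### Partitions with non-repeating odd parts and their 2-modular graphs -/

/-- Partitions with non-repeating (distinct) odd parts. -/
def Pod {n : ℕ} (π : n.Partition) : Prop := ∀ x, Odd x → π.parts.count x ≤ 1

/-- The size (sum of entries) of the `c`-th column (1-indexed) of the 2-modular graph. -/
def mcolSize (L : List ℕ) (c : ℕ) : ℕ :=
  (L.map (fun x => if 2 * c ≤ x then 2 else if x = 2 * c - 1 then 1 else 0)).sum

/-- The length (number of entries) of the `c`-th column (1-indexed) of the 2-modular graph. -/
def mcolLen (L : List ℕ) (c : ℕ) : ℕ := L.countP (fun x => 2 * c - 1 ≤ x)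

/-- The number of entries in a row of the 2-modular graph recording the part `x`,
namely `⌈x/2⌉`. -/
def mrowLen (x : ℕ) : ℕ := (x + 1) / 2

/-- The 2-modular Durfee square size: the largest `k` with `⌈b_k/2⌉ ≥ k`. -/
def mdurfee (L : List ℕ) : ℕ := (List.range L.length).countP (fun i => 2 * i + 1 ≤ L.getD i 0)

/-- The `(i+1)`-st 2-modular successive rank: (size of row `i+1`) − (size of column `i+1`). -/
def mrank (L : List ℕ) (i : ℕ) : ℤ := (L.getD i 0 : ℤ) - (mcolSize L (i + 1) : ℤ)

/-- The 2-modular successive rank vector. -/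
def mranks (L : List ℕ) : List ℤ := (List.range (mdurfee L)).map (mrank L)

/-- A minimal basis partition in `P_{o,d}`: the partitioned number is minimal among all
partitions with non-repeating odd parts having the same 2-modular successive rank vector. -/
def MinBasis {n : ℕ} (μ : n.Partition) : Prop :=
  Pod μ ∧ ∀ (m : ℕ) (μ' : m.Partition), Pod μ' →
    mranks (sparts μ') = mranks (sparts μ) → n ≤ m

/-- A basis partition in `P_{o,d}`: no row of the 2-modular graph strictly below the Durfee
square has size equal to the size of a column strictly to the right of the Durfee square. -/
def PodBasis {n : ℕ} (π : n.Partition) : Prop :=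
  Pod π ∧ ∀ i, mdurfee (sparts π) ≤ i → i < (sparts π).length →
    ∀ c, mdurfee (sparts π) < c → mcolSize (sparts π) c ≠ (sparts π).getD i 0

/-- The signature of a basis partition in `P_{o,d}`: the number of distinct sizes among the
rows of the 2-modular graph strictly below the Durfee square. -/
def msig (L : List ℕ) : ℕ := ((L.drop (mdurfee L)).dedup).length

/-- The ℓ-signature: the number of distinct lengths among the rows of the 2-modular
graph strictly below the Durfee square. -/
def lsig (L : List ℕ) : ℕ := (((L.drop (mdurfee L)).map mrowLen).dedup).length

/-- `b(n;j)` for `P_{o,d}`: the number of basis partitions of `n` in `P_{o,d}` with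
signature `j`. -/
noncomputable def podB (n j : ℕ) : ℕ := Nat.card {π : n.Partition // PodBasis π ∧ msig (sparts π) = j}

/-- The number of odd parts. -/
def numOdd (L : List ℕ) : ℕ := L.countP (fun x => x % 2 = 1)

/-- A special partition: distinct parts with consecutive differences `≥ 4`, where a
difference equal to `4` is permitted only when both parts are even. -/
def Special (L : List ℕ) : Prop :=
  ∀ i, i + 1 < L.length →
    L.getD (i + 1) 0 + 4 ≤ L.getD i 0 ∧
      (L.getD i 0 = L.getD (i + 1) 0 + 4 → Even (L.getD i 0) ∧ Even (L.getD (i + 1) 0))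

/-- The `i`-th part of a special partition, with the convention that the part just after
the last one is `-2`. -/
def hpart (L : List ℕ) (i : ℕ) : ℤ := if i < L.length then (L.getD i 0 : ℤ) else -2

/-- `ℓ(π)`: the number of gaps `> 4` in a special partition, with the convention
`h_{k+1} = -2`. -/
def ell (L : List ℕ) : ℕ :=
  ((Finset.range L.length).filter (fun i => 4 < hpart L i - hpart L (i + 1))).card


/-! helpers -/

lemma antichain {f : ℕ → ℕ} (hf : ∀ i, 1 ≤ i → f (i+1) ≤ f i) :
    ∀ a b, 1 ≤ a → a ≤ b → f b ≤ f a := by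
  intro a b ha hab
  induction b with
  | zero => omega
  | succ b ih =>
    rcases Nat.lt_or_ge a (b+1) with h | h
    · exact le_trans (hf b (by omega)) (ih (by omega))
    · have : a = b + 1 := by omega
      subst this; exact le_refl _

lemma sorted_getD_mono {L : List ℕ} (h : List.Pairwise (· ≥ ·) L) {i j : ℕ} (hij : i ≤ j) :
    L.getD j 0 ≤ L.getD i 0 := by
  rcases Nat.lt_or_ge j L.length with hj | hj
  · have hi : i < L.length := lt_of_le_of_lt hij hj
    rw [List.getD_eq_getElem _ _ hj, List.getD_eq_getElem _ _ hi]
    rcases Nat.eq_or_lt_of_le hij with rfl | hlt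
    · exact le_refl _
    · exact List.Pairwise.rel_get_of_lt h (by simpa using hlt)
  · rw [List.getD_eq_default _ _ hj]; exact Nat.zero_le _

lemma filter_range_antitone (p : ℕ → Bool) (N : ℕ)
    (hp : ∀ i j, i ≤ j → p j = true → p i = true) :
    (List.range N).filter p = List.range ((List.range N).countP p) := by
  induction N with
  | zero => simp
  | succ N ih =>
    rw [List.range_succ, List.filter_append, List.countP_append, ih]
    by_cases h : p N = true
    · have hall : ∀ i ∈ List.range N, p i = true := fun i hi =>
        hp i N (Nat.le_of_lt (List.mem_range.1 hi)) h
      have h1 : (List.range N).countP p = N := by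
        rw [List.countP_eq_length.2 hall, List.length_range]
      rw [h1]
      simp [h, List.range_succ, h1]
    · simp [h, Bool.eq_false_iff.2 h]

lemma countP_range_antitone_iff {p : ℕ → Bool} {N : ℕ}
    (hp : ∀ i j, i ≤ j → p j = true → p i = true) {i : ℕ} (hi : i < N) :
    p i = true ↔ i < (List.range N).countP p := by
  have hf := filter_range_antitone p N hp
  constructor
  · intro h
    have hm : i ∈ (List.range N).filter p := by
      rw [List.mem_filter]; exact ⟨List.mem_range.2 hi, h⟩
    rw [hf, List.mem_range] at hm; exact hm
  · intro h
    have hm : i ∈ (List.range N).filter p := by rw [hf, List.mem_range]; exact h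
    exact (List.mem_filter.1 hm).2

lemma countP_lt_range {k N : ℕ} (h : k ≤ N) :
    (List.range N).countP (fun i => decide (i < k)) = k := by
  induction N with
  | zero =>
    have : k = 0 := by omega
    subst this; simp
  | succ N ih =>
    rw [List.range_succ, List.countP_append]
    rcases Nat.lt_or_ge k (N+1) with h1 | h1
    · have : ¬ (N < k) := by omega
      simp [this, ih (by omega)]
    · have hk : k = N + 1 := by omega
      subst hk
      have : ∀ a ∈ List.range N, decide (a < N + 1) = true := by
        intro a ha
        have := List.mem_range.1 ha
        simp only [decide_eq_true_eq]
        omega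
      rw [List.countP_eq_length.2 this, List.length_range]
      simp

lemma map_getD_range (L : List ℕ) : (List.range L.length).map (fun i => L.getD i 0) = L := by
  apply List.ext_getElem
  · simp
  · intro i h1 h2
    simp only [List.getElem_map, List.getElem_range]
    exact List.getD_eq_getElem _ _ h2

lemma countP_pos_repr (L : List ℕ) (p : ℕ → Bool) :
    L.countP p = (List.range L.length).countP (fun i => p (L.getD i 0)) := by
  conv_lhs => rw [← map_getD_range L]
  rw [List.countP_map]; rfl

lemma countP_le_split (L : List ℕ) (j : ℕ) :
    L.countP (fun x => j ≤ x) = L.count j + L.countP (fun x => j + 1 ≤ x) := by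
  induction L with
  | nil => simp
  | cons a L ih =>
    simp only [List.countP_cons, List.count_cons, ih]
    by_cases h1 : a = j
    · subst h1; simp; omega
    · by_cases h2 : j ≤ a
      · have h3 : j + 1 ≤ a := by omega
        simp [h2, h3, h1]; omega
      · have h3 : ¬ (j + 1 ≤ a) := by omega
        simp [h2, h3, h1]

/-! durfee and conj facts for sorted lists -/

section SortedFacts

variable {L : List ℕ} (hs : List.Pairwise (· ≥ ·) L)

lemma durfee_le_length : durfee L ≤ L.length := by
  have := List.countP_le_length (l := List.range L.length)
    (p := fun i => decide (i + 1 ≤ L.getD i 0))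
  simpa [durfee] using this

include hs

lemma durfee_antitone_pred : ∀ i j : ℕ, i ≤ j →
    decide (j + 1 ≤ L.getD j 0) = true → decide (i + 1 ≤ L.getD i 0) = true := by
  intro i j hij h
  simp only [decide_eq_true_eq] at *
  have := sorted_getD_mono hs hij
  omega

lemma durfee_iff {i : ℕ} (hi : i < L.length) :
    i + 1 ≤ L.getD i 0 ↔ i < durfee L := by
  have := countP_range_antitone_iff (N := L.length)
    (p := fun i => decide (i + 1 ≤ L.getD i 0)) (durfee_antitone_pred hs)
    (by simpa using hi)
  simp only [decide_eq_true_eq] at this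
  exact this.trans (by rw [durfee])

lemma getD_ge_durfee {i : ℕ} (hi : i < durfee L) : durfee L ≤ L.getD i 0 := by
  have hk := durfee_le_length (L := L)
  have h1 : durfee L - 1 < L.length := by omega
  have h2 : (durfee L - 1) + 1 ≤ L.getD (durfee L - 1) 0 := by
    rw [durfee_iff hs h1]; omega
  have h3 := sorted_getD_mono hs (i := i) (j := durfee L - 1) (by omega)
  omega

lemma getD_le_durfee {i : ℕ} (hi : durfee L ≤ i) : L.getD i 0 ≤ durfee L := by
  rcases Nat.lt_or_ge (durfee L) L.length with h | h
  · have h2 : ¬ (durfee L + 1 ≤ L.getD (durfee L) 0) := by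
      rw [durfee_iff hs h]; omega
    have h3 := sorted_getD_mono hs (i := durfee L) (j := i) hi
    omega
  · have : L.length ≤ i := by omega
    rw [List.getD_eq_default _ _ this]
    exact Nat.zero_le _

omit hs

lemma conj_le_length (c : ℕ) : conj L c ≤ L.length := List.countP_le_length

lemma conj_anti {c c' : ℕ} (h : c ≤ c') : conj L c' ≤ conj L c := by
  apply List.countP_mono_left
  intro x _ hx
  simp only [decide_eq_true_eq] at *
  omega

include hs

lemma conj_iff {i : ℕ} (hi : i < L.length) (c : ℕ) :
    c ≤ L.getD i 0 ↔ i < conj L c := by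
  have hrepr : conj L c =
      (List.range L.length).countP (fun i => decide (c ≤ L.getD i 0)) := by
    rw [conj, countP_pos_repr]
  have hanti : ∀ i j : ℕ, i ≤ j →
      decide (c ≤ L.getD j 0) = true → decide (c ≤ L.getD i 0) = true := by
    intro i j hij h
    simp only [decide_eq_true_eq] at *
    have := sorted_getD_mono hs hij
    omega
  have := countP_range_antitone_iff (N := L.length)
    (p := fun i => decide (c ≤ L.getD i 0)) hanti (by simpa using hi)
  simp only [decide_eq_true_eq] at this
  rw [hrepr]
  exact this

lemma durfee_le_conj {c : ℕ} (hc : c ≤ durfee L) : durfee L ≤ conj L c := by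
  rcases Nat.eq_zero_or_pos (durfee L) with h0 | h0
  · omega
  · have h1 : durfee L - 1 < L.length := by
      have := durfee_le_length (L := L); omega
    have h2 : c ≤ L.getD (durfee L - 1) 0 := by
      have := getD_ge_durfee hs (i := durfee L - 1) (by omega)
      omega
    rw [conj_iff hs h1] at h2
    omega

lemma conj_le_durfee {c : ℕ} (hc : durfee L < c) : conj L c ≤ durfee L := by
  by_contra h
  push_neg at h
  have h1 : durfee L < L.length := lt_of_lt_of_le h (conj_le_length c)
  have h2 : c ≤ L.getD (durfee L) 0 := (conj_iff hs h1 c).2 h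
  have h3 := getD_le_durfee hs (i := durfee L) (le_refl _)
  omega

end SortedFacts

/-! the row/column data of a partition relative to its Durfee square -/

def mS (L : List ℕ) (j : ℕ) : ℕ := L.getD (j - 1) 0 - durfee L
def lS (L : List ℕ) (j : ℕ) : ℕ := conj L j - durfee L

section MLFacts

variable {L : List ℕ} (hs : List.Pairwise (· ≥ ·) L)

include hs

lemma mS_anti : ∀ j, 1 ≤ j → mS L (j+1) ≤ mS L j := by
  intro j hj
  have := sorted_getD_mono hs (i := j - 1) (j := j) (by omega)
  simp only [mS]
  have : L.getD (j + 1 - 1) 0 ≤ L.getD (j - 1) 0 := by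
    apply sorted_getD_mono hs; omega
  omega

lemma mS_zero : ∀ j, durfee L < j → mS L j = 0 := by
  intro j hj
  have := getD_le_durfee hs (i := j - 1) (by omega)
  simp only [mS]
  omega

omit hs in
lemma lS_anti : ∀ j, 1 ≤ j → lS L (j+1) ≤ lS L j := by
  intro j _
  have := conj_anti (L := L) (c := j) (c' := j + 1) (by omega)
  simp only [lS]
  omega

lemma lS_zero : ∀ j, durfee L < j → lS L j = 0 := by
  intro j hj
  have := conj_le_durfee hs hj
  simp only [lS]
  omega

lemma getD_eq_mS {i : ℕ} (hi : i < durfee L) :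
    L.getD i 0 = durfee L + mS L (i+1) := by
  have := getD_ge_durfee hs hi
  simp only [mS, Nat.add_sub_cancel]
  omega

lemma conj_eq_lS {j : ℕ} (hj1 : 1 ≤ j) (hjk : j ≤ durfee L) :
    conj L j = durfee L + lS L j := by
  have := durfee_le_conj hs hjk
  simp only [lS]
  omega

end MLFacts

/-! the canonical list built from Durfee size `k` and row/column data `(m, l)` -/

def lowerList : ℕ → (ℕ → ℕ) → List ℕ
  | 0, _ => []
  | (k+1), l => List.replicate (l (k+1) - l (k+1+1)) (k+1) ++ lowerList k l

def topList (k : ℕ) (m : ℕ → ℕ) : List ℕ := (List.range k).map (fun i => k + m (i+1))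

def buildList (k : ℕ) (m l : ℕ → ℕ) : List ℕ := topList k m ++ lowerList k l

section Build

variable {k : ℕ} {m l : ℕ → ℕ}

lemma mem_lowerList {x : ℕ} : ∀ {k : ℕ}, x ∈ lowerList k l → 1 ≤ x ∧ x ≤ k := by
  intro k
  induction k with
  | zero => intro h; simp [lowerList] at h
  | succ k ih =>
    intro h
    rw [lowerList, List.mem_append] at h
    rcases h with h | h
    · have := (List.mem_replicate.1 h).2
      omega
    · have := ih h
      omega

variable (Hl : ∀ j, 1 ≤ j → l (j+1) ≤ l j)

include Hl

lemma mem_lowerList_iff {j : ℕ} :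
    ∀ {k : ℕ}, j ∈ lowerList k l ↔ 1 ≤ j ∧ j ≤ k ∧ l (j+1) < l j := by
  intro k
  induction k with
  | zero => simp [lowerList]; omega
  | succ k ih =>
    rw [lowerList, List.mem_append, List.mem_replicate, ih]
    constructor
    · rintro (⟨hne, rfl⟩ | ⟨h1, h2, h3⟩)
      · refine ⟨by omega, le_refl _, by omega⟩
      · exact ⟨h1, by omega, h3⟩
    · rintro ⟨h1, h2, h3⟩
      rcases Nat.lt_or_ge j (k+1) with h | h
      · right; exact ⟨h1, by omega, h3⟩
      · left
        have : j = k + 1 := by omega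
        subst this
        exact ⟨by omega, rfl⟩

omit Hl

lemma sorted_lowerList : ∀ {k : ℕ}, List.Pairwise (· ≥ ·) (lowerList k l) := by
  intro k
  induction k with
  | zero => simp [lowerList]
  | succ k ih =>
    rw [lowerList, List.pairwise_append]
    refine ⟨?_, ih, ?_⟩
    · exact List.pairwise_replicate.2 (Or.inr (le_refl _))
    · intro a ha b hb
      have h1 := (List.mem_replicate.1 ha).2
      have h2 := (mem_lowerList hb).2
      omega

include Hl

lemma count_lowerList {j : ℕ} :
    ∀ {k : ℕ}, (lowerList k l).count j = if 1 ≤ j ∧ j ≤ k then l j - l (j+1) else 0 := by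
  intro k
  induction k with
  | zero =>
    simp only [lowerList, List.count_nil]
    rw [if_neg (by omega)]
  | succ k ih =>
    rw [lowerList, List.count_append, List.count_replicate, ih]
    by_cases h : j = k + 1
    · subst h
      simp [show ¬(1 ≤ k + 1 ∧ k + 1 ≤ k) by omega]
    · have : (k + 1 == j) = false := by simp [Ne.symm h]
      rw [this]
      by_cases h2 : 1 ≤ j ∧ j ≤ k
      · simp [h2, show 1 ≤ j ∧ j ≤ k + 1 by omega]
      · simp [h2, show ¬(1 ≤ j ∧ j ≤ k + 1) by omega]

lemma countP_le_lowerList {c : ℕ} (hc : 1 ≤ c) :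
    ∀ {k : ℕ}, c ≤ k + 1 → (lowerList k l).countP (fun x => decide (c ≤ x)) = l c - l (k+1) := by
  intro k
  induction k with
  | zero => intro h; have : c = 1 := by omega
            subst this; simp [lowerList]
  | succ k ih =>
    intro hck
    rw [lowerList, List.countP_append, List.countP_replicate]
    rcases Nat.lt_or_ge (k+1) c with h | h
    · have hc2 : c = k + 1 + 1 := by omega
      have hz : (lowerList k l).countP (fun x => decide (c ≤ x)) = 0 := by
        rw [List.countP_eq_zero]
        intro a ha
        have := (mem_lowerList ha).2
        simp only [decide_eq_true_eq]
        omega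
      rw [hz]
      simp [show ¬ (c ≤ k + 1) by omega, hc2]
    · have h1 : l (k+1+1) ≤ l (k+1) := Hl (k+1) (by omega)
      have h2 : l (k+1) ≤ l c := antichain Hl c (k+1) hc h
      rw [ih h]
      simp only [decide_eq_true_eq, if_pos h]
      omega

lemma sum_lowerList :
    ∀ {k : ℕ}, (lowerList k l).sum + k * l (k+1) = ∑ j ∈ Finset.range k, l (j+1) := by
  intro k
  induction k with
  | zero => simp [lowerList]
  | succ k ih =>
    rw [lowerList, List.sum_append, List.sum_replicate, smul_eq_mul,
      Finset.sum_range_succ, ← ih]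
    have h1 : l (k+1+1) ≤ l (k+1) := Hl (k+1) (by omega)
    zify [h1]
    ring

end Build

section BuildFacts

variable {k : ℕ} {m l : ℕ → ℕ}
variable (Hm : ∀ j, 1 ≤ j → m (j+1) ≤ m j)
variable (Hl : ∀ j, 1 ≤ j → l (j+1) ≤ l j)
variable (Hl0 : l (k+1) = 0)

lemma topList_length : (topList k m).length = k := by simp [topList]

lemma mem_topList {x : ℕ} (hx : x ∈ topList k m) : k ≤ x := by
  simp only [topList, List.mem_map] at hx
  obtain ⟨i, _, rfl⟩ := hx
  omega

lemma getD_topList {i : ℕ} (hi : i < k) : (topList k m).getD i 0 = k + m (i+1) := by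
  rw [List.getD_eq_getElem _ _ (by simp [topList_length, hi])]
  simp [topList]

include Hm in
lemma sorted_topList : List.Pairwise (· ≥ ·) (topList k m) := by
  rw [topList, List.pairwise_map]
  apply List.Pairwise.imp ?_ (List.pairwise_lt_range)
  · intro a b hab
    have := antichain Hm (a+1) (b+1) (by omega) (by omega)
    omega

include Hm in
lemma sorted_buildList : List.Pairwise (· ≥ ·) (buildList k m l) := by
  rw [buildList, List.pairwise_append]
  refine ⟨sorted_topList Hm, sorted_lowerList, ?_⟩
  intro a ha b hb
  have h1 := mem_topList ha
  have h2 := (mem_lowerList hb).2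
  omega

lemma pos_buildList : ∀ x ∈ buildList k m l, 0 < x := by
  intro x hx
  rw [buildList, List.mem_append] at hx
  rcases hx with hx | hx
  · simp only [topList, List.mem_map] at hx
    obtain ⟨i, hi, rfl⟩ := hx
    have := List.mem_range.1 hi
    omega
  · exact (mem_lowerList hx).1

lemma getD_buildList {i : ℕ} (hi : i < k) :
    (buildList k m l).getD i 0 = k + m (i+1) := by
  rw [buildList, List.getD_append _ _ _ _ (by simp [topList_length, hi])]
  exact getD_topList hi

lemma drop_buildList : (buildList k m l).drop k = lowerList k l := by
  rw [buildList]
  have h := List.drop_left (l₁ := topList k m) (l₂ := lowerList k l)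
  rwa [topList_length] at h

lemma length_buildList_ge : k ≤ (buildList k m l).length := by
  rw [buildList, List.length_append, topList_length]
  omega

lemma getD_buildList_lower {i : ℕ} (hi : k ≤ i) : (buildList k m l).getD i 0 ≤ k := by
  rcases Nat.lt_or_ge i (buildList k m l).length with h | h
  · rw [List.getD_eq_getElem _ _ h]
    have hik : k + (i - k) = i := by omega
    have hmem : (buildList k m l)[i] ∈ (buildList k m l).drop k := by
      have h2 : k + (i - k) < (buildList k m l).length := by omega
      have h3 := List.getElem_drop' (i := k) (j := i - k) h2
      have h4 : (buildList k m l)[i] = (buildList k m l)[k + (i-k)]'h2 := by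
        congr 1; omega
      rw [h4, h3]
      apply List.getElem_mem
    rw [drop_buildList] at hmem
    exact (mem_lowerList hmem).2
  · rw [List.getD_eq_default _ _ h]
    omega

include Hm in
lemma durfee_buildList : durfee (buildList k m l) = k := by
  rw [durfee]
  have hcong : ∀ i ∈ List.range (buildList k m l).length,
      (decide (i + 1 ≤ (buildList k m l).getD i 0) = true ↔ decide (i < k) = true) := by
    intro i hi
    rcases Nat.lt_or_ge i k with h | h
    · rw [getD_buildList h]
      simp only [decide_eq_true_eq]
      omega
    · have := getD_buildList_lower (m := m) (l := l) h
      simp only [decide_eq_true_eq]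
      omega
  rw [List.countP_congr hcong]
  exact countP_lt_range (length_buildList_ge)

include Hl in
lemma conj_buildList {c : ℕ} (hc1 : 1 ≤ c) (hck : c ≤ k) :
    conj (buildList k m l) c = k + ((lowerList k l).countP (fun x => decide (c ≤ x))) := by
  rw [conj, buildList, List.countP_append]
  congr 1
  rw [List.countP_eq_length.2, topList_length]
  intro a ha
  have := mem_topList ha
  simp only [decide_eq_true_eq]
  omega

include Hl Hl0 in
lemma conj_buildList' {c : ℕ} (hc1 : 1 ≤ c) (hck : c ≤ k) :
    conj (buildList k m l) c = k + l c := by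
  rw [conj_buildList Hl hc1 hck, countP_le_lowerList Hl hc1 (by omega), Hl0]
  omega

lemma conj_buildList_gt {c : ℕ} (hc : k < c) :
    conj (buildList k m l) c = (List.range k).countP (fun i => decide (c ≤ k + m (i+1))) := by
  rw [conj, buildList, List.countP_append]
  have h2 : (lowerList k l).countP (fun b => decide (c ≤ b)) = 0 := by
    rw [List.countP_eq_zero]
    intro a ha
    have := (mem_lowerList ha).2
    simp only [decide_eq_true_eq]
    omega
  rw [h2, topList, List.countP_map]
  simp only [Nat.add_zero]
  rfl

lemma list_sum_map_range (f : ℕ → ℕ) :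
    ∀ k : ℕ, ((List.range k).map f).sum = ∑ i ∈ Finset.range k, f i := by
  intro k
  induction k with
  | zero => simp
  | succ k ih => rw [List.range_succ, List.map_append, List.sum_append,
      Finset.sum_range_succ, ih]; simp

include Hl Hl0 in
lemma sum_buildList :
    (buildList k m l).sum = k * k + ∑ i ∈ Finset.range k, (m (i+1) + l (i+1)) := by
  rw [buildList, List.sum_append, topList, list_sum_map_range]
  have h1 := sum_lowerList Hl (k := k)
  rw [Hl0] at h1
  rw [Finset.sum_add_distrib, Finset.sum_add_distrib, Finset.sum_const,
    Finset.card_range, smul_eq_mul]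
  omega

end BuildFacts


section RanksBuild

variable {k : ℕ} {m l : ℕ → ℕ}
variable (Hm : ∀ j, 1 ≤ j → m (j+1) ≤ m j)
variable (Hl : ∀ j, 1 ≤ j → l (j+1) ≤ l j)
variable (Hl0 : l (k+1) = 0)

include Hm Hl Hl0 in
lemma ranks_buildList :
    ranks (buildList k m l) = (List.range k).map (fun i => (m (i+1) : ℤ) - (l (i+1) : ℤ)) := by
  rw [ranks, durfee_buildList Hm]
  apply List.map_congr_left
  intro i hi
  have hik := List.mem_range.1 hi
  rw [rank, getD_buildList hik, conj_buildList' Hl Hl0 (by omega) (by omega)]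
  push_cast
  ring

include Hm in
lemma col_iff_build (Hm0 : ∀ j, k < j → m j = 0) {j : ℕ} (hj1 : 1 ≤ j) (hjk : j ≤ k) :
    (∃ c, k < c ∧ conj (buildList k m l) c = j) ↔ m (j+1) < m j := by
  have hanti : ∀ (c : ℕ), ∀ a b : ℕ, a ≤ b →
      decide (c ≤ k + m (b+1)) = true → decide (c ≤ k + m (a+1)) = true := by
    intro c a b hab h
    simp only [decide_eq_true_eq] at *
    have := antichain Hm (a+1) (b+1) (by omega) (by omega)
    omega
  constructor
  · rintro ⟨c, hc, hconj⟩
    rw [conj_buildList_gt hc] at hconj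
    have h1 : decide (c ≤ k + m ((j-1)+1)) = true := by
      rw [countP_range_antitone_iff (N := k) (hanti c) (by omega), hconj]
      omega
    have hj' : j - 1 + 1 = j := by omega
    rw [hj'] at h1
    simp only [decide_eq_true_eq] at h1
    rcases Nat.lt_or_ge j k with hjlt | hjge
    · have h2 : decide (c ≤ k + m (j+1)) = true ↔ j < (List.range k).countP
          (fun i => decide (c ≤ k + m (i+1))) :=
        countP_range_antitone_iff (N := k) (hanti c) hjlt
      rw [hconj] at h2
      have h3 : ¬ (decide (c ≤ k + m (j+1)) = true) := by
        rw [h2]; omega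
      simp only [decide_eq_true_eq] at h3
      omega
    · have hj : j = k := by omega
      have h4 : m (j+1) = 0 := Hm0 (j+1) (by omega)
      omega
  · intro hlt
    refine ⟨k + m j, by omega, ?_⟩
    rw [conj_buildList_gt (by omega)]
    have hcong : ∀ i ∈ List.range k,
        (decide (k + m j ≤ k + m (i+1)) = true ↔ decide (i < j) = true) := by
      intro i hi
      have hik := List.mem_range.1 hi
      simp only [decide_eq_true_eq]
      constructor
      · intro h
        by_contra hc
        push_neg at hc
        have := antichain Hm (j+1) (i+1) (by omega) (by omega)
        omega
      · intro h
        have := antichain Hm (i+1) j (by omega) (by omega)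
        omega
    rw [List.countP_congr hcong, countP_lt_range (by omega)]

end RanksBuild

/-! reconstruction of a sorted positive list from its Durfee data -/

section Recon

variable {L : List ℕ} (hs : List.Pairwise (· ≥ ·) L) (hpos : ∀ x ∈ L, 0 < x)

include hs

lemma take_recon : L.take (durfee L) = topList (durfee L) (mS L) := by
  have hk := durfee_le_length (L := L)
  apply List.ext_getElem
  · rw [List.length_take, topList_length]
    omega
  · intro i h1 h2
    rw [List.getElem_take]
    have hik : i < durfee L := by
      rw [List.length_take] at h1
      omega
    have h3 : i < (List.range (durfee L)).length := by simpa using hik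
    simp only [topList, List.getElem_map, List.getElem_range]
    have := getD_eq_mS hs hik
    rw [List.getD_eq_getElem _ _ (by omega)] at this
    exact this

lemma mem_drop_le {x : ℕ} (hx : x ∈ L.drop (durfee L)) : x ≤ durfee L := by
  rw [List.mem_iff_getElem] at hx
  obtain ⟨t, ht, rfl⟩ := hx
  have h2 : durfee L + t < L.length := by
    rw [List.length_drop] at ht
    omega
  rw [← List.getElem_drop' h2]
  rw [← List.getD_eq_getElem L 0 h2]
  exact getD_le_durfee hs (by omega)

lemma countP_drop {c : ℕ} (hc1 : 1 ≤ c) (hck : c ≤ durfee L) :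
    (L.drop (durfee L)).countP (fun x => decide (c ≤ x)) = conj L c - durfee L := by
  have hk := durfee_le_length (L := L)
  have hsplit : conj L c = (L.take (durfee L)).countP (fun x => decide (c ≤ x)) +
      (L.drop (durfee L)).countP (fun x => decide (c ≤ x)) := by
    rw [conj, ← List.countP_append, List.take_append_drop]
  have htake : (L.take (durfee L)).countP (fun x => decide (c ≤ x)) = durfee L := by
    rw [take_recon hs]
    rw [List.countP_eq_length.2, topList_length]
    intro a ha
    have := mem_topList ha
    simp only [decide_eq_true_eq]
    omega
  omega

include hpos

lemma drop_recon : L.drop (durfee L) = lowerList (durfee L) (lS L) := by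
  have hk := durfee_le_length (L := L)
  have hsd : List.Pairwise (· ≥ ·) (L.drop (durfee L)) :=
    List.Pairwise.sublist (List.drop_sublist _ _) hs
  have hsl : List.Pairwise (· ≥ ·) (lowerList (durfee L) (lS L)) := sorted_lowerList
  refine List.Perm.eq_of_pairwise' hsd hsl (List.perm_iff_count.2 ?_)
  · intro j
    rw [count_lowerList (lS_anti (L := L))]
    rcases Nat.eq_zero_or_pos j with rfl | hj1
    · rw [if_neg (by omega), List.count_eq_zero]
      intro h0
      have := hpos 0 (List.mem_of_mem_drop h0)
      omega
    · rcases Nat.lt_or_ge (durfee L) j with hgt | hle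
      · rw [if_neg (by omega), List.count_eq_zero]
        intro hmem
        have := mem_drop_le hs hmem
        omega
      · rw [if_pos (by omega)]
        have hsplit := countP_le_split (L.drop (durfee L)) j
        have h1 := countP_drop hs (c := j) hj1 hle
        have hconj1 := durfee_le_conj hs (c := j) hle
        rcases Nat.lt_or_ge j (durfee L) with hlt | hge
        · have h2 := countP_drop hs (c := j+1) (by omega) (by omega)
          have hconj2 := durfee_le_conj hs (c := j+1) (by omega)
          simp only [lS]
          omega
        · have hjk : j = durfee L := by omega
          have h2 : (L.drop (durfee L)).countP (fun x => decide (j+1 ≤ x)) = 0 := by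
            rw [List.countP_eq_zero]
            intro a ha
            have := mem_drop_le hs ha
            simp only [decide_eq_true_eq]
            omega
          have h3 : lS L (j+1) = 0 := lS_zero hs (j+1) (by omega)
          simp only [lS] at *
          omega

lemma recon : L = buildList (durfee L) (mS L) (lS L) := by
  conv_lhs => rw [← List.take_append_drop (durfee L) L]
  rw [take_recon hs, drop_recon hs hpos]
  rfl

lemma sum_recon : L.sum = durfee L * durfee L +
    ∑ i ∈ Finset.range (durfee L), (mS L (i+1) + lS L (i+1)) := by
  conv_lhs => rw [recon hs hpos]
  exact sum_buildList (lS_anti (L := L)) (lS_zero hs (durfee L + 1) (by omega))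

lemma col_iff {j : ℕ} (hj1 : 1 ≤ j) (hjk : j ≤ durfee L) :
    (∃ c, durfee L < c ∧ conj L c = j) ↔ mS L (j+1) < mS L j := by
  have h := col_iff_build (k := durfee L) (m := mS L) (l := lS L)
    (mS_anti hs) (fun j hj => mS_zero hs j hj) hj1 hjk
  rw [← recon hs hpos] at h
  exact h

lemma mem_drop_iff {j : ℕ} :
    j ∈ L.drop (durfee L) ↔ 1 ≤ j ∧ j ≤ durfee L ∧ lS L (j+1) < lS L j := by
  rw [drop_recon hs hpos]
  exact mem_lowerList_iff (lS_anti (L := L))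

lemma sig_eq : sig L =
    ((Finset.Icc 1 (durfee L)).filter (fun j => lS L (j+1) < lS L j)).card := by
  rw [sig, ← List.card_toFinset]
  congr 1
  apply Finset.ext
  intro j
  rw [List.mem_toFinset, mem_drop_iff hs hpos, Finset.mem_filter, Finset.mem_Icc]
  tauto

end Recon




/-! the partition attached to a list -/

def ofList (L : List ℕ) (h : ∀ x ∈ L, 0 < x) : (L.sum).Partition :=
  ⟨(L : Multiset ℕ), fun hi => h _ (by simpa using hi), by simp⟩

lemma sparts_sorted {n : ℕ} (π : n.Partition) : List.Pairwise (· ≥ ·) (sparts π) :=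
  Multiset.pairwise_sort _ _

lemma sparts_pos {n : ℕ} (π : n.Partition) : ∀ x ∈ sparts π, 0 < x := by
  intro x hx
  exact π.parts_pos (by rwa [← Multiset.mem_sort (· ≥ ·)])

lemma sparts_sum {n : ℕ} (π : n.Partition) : (sparts π).sum = n := by
  have h : ((sparts π : List ℕ) : Multiset ℕ) = π.parts := Multiset.sort_eq _ _
  have := π.parts_sum
  rw [← h] at this
  simpa using this

lemma sparts_ofList (L : List ℕ) (h : ∀ x ∈ L, 0 < x) (hs : List.Pairwise (· ≥ ·) L) :
    sparts (ofList L h) = L := by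
  have hperm : List.Perm (sparts (ofList L h)) L := by
    rw [← Multiset.coe_eq_coe]
    exact Multiset.sort_eq _ _
  exact List.Perm.eq_of_pairwise' (sparts_sorted _) hs hperm

/-! characterization of basis partitions -/

lemma rank_eq_mS_lS {L : List ℕ} (hs : List.Pairwise (· ≥ ·) L) {i : ℕ}
    (hi : i < durfee L) : rank L i = (mS L (i+1) : ℤ) - (lS L (i+1) : ℤ) := by
  rw [rank, getD_eq_mS hs hi, conj_eq_lS hs (by omega) (by omega)]
  push_cast
  ring

lemma ranks_length (L : List ℕ) : (ranks L).length = durfee L := by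
  simp [ranks]

lemma rank_of_ranks_eq {L L' : List ℕ} (h : ranks L' = ranks L) {i : ℕ}
    (hi : i < durfee L) : rank L' i = rank L i := by
  have hlen : durfee L' = durfee L := by
    rw [← ranks_length, ← ranks_length, h]
  have h1 : (ranks L')[i]'(by rw [ranks_length, hlen]; exact hi) =
      (ranks L)[i]'(by rw [ranks_length]; exact hi) := by
    congr 1
  simpa [ranks, List.getElem_map] using h1

lemma isBasis_of_disj {n : ℕ} (π : n.Partition)
    (hd : ∀ j, 1 ≤ j → j ≤ durfee (sparts π) →
      ¬(mS (sparts π) (j+1) < mS (sparts π) j ∧ lS (sparts π) (j+1) < lS (sparts π) j)) :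
    IsBasis π := by
  intro N π' hr
  set L := sparts π with hL
  set L' := sparts π' with hL'
  have hsL : List.Pairwise (· ≥ ·) L := sparts_sorted π
  have hsL' : List.Pairwise (· ≥ ·) L' := sparts_sorted π'
  have hpL : ∀ x ∈ L, 0 < x := sparts_pos π
  have hpL' : ∀ x ∈ L', 0 < x := sparts_pos π'
  set k := durfee L with hk
  have hk' : durfee L' = k := by
    rw [← ranks_length, hr, ranks_length]
  -- the rank equations
  have E : ∀ j, 1 ≤ j → j ≤ k → mS L' j + lS L j = mS L j + lS L' j := by
    intro j h1 h2
    have hre := rank_of_ranks_eq hr (i := j - 1) (by omega)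
    rw [rank_eq_mS_lS hsL (by omega), rank_eq_mS_lS hsL' (by rw [hk']; omega)] at hre
    have hj : j - 1 + 1 = j := by omega
    rw [hj] at hre
    omega
  -- domination
  have dom : ∀ t j, 1 ≤ j → k + 1 ≤ j + t → mS L j ≤ mS L' j ∧ lS L j ≤ lS L' j := by
    intro t
    induction t with
    | zero =>
      intro j h1 h2
      rw [mS_zero hsL j (by omega), lS_zero hsL j (by omega)]
      omega
    | succ t ih =>
      intro j h1 h2
      rcases Nat.lt_or_ge k j with h | h
      · rw [mS_zero hsL j (by omega), lS_zero hsL j (by omega)]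
        omega
      · have hih := ih (j+1) (by omega) (by omega)
        have hE := E j h1 h
        have hd' := hd j h1 h
        have ha1 := mS_anti hsL j h1
        have ha2 := lS_anti (L := L) j h1
        have ha3 := mS_anti hsL' j h1
        have ha4 := lS_anti (L := L') j h1
        omega
  have hsum : ∀ i ∈ Finset.range k, mS L (i+1) + lS L (i+1) ≤ mS L' (i+1) + lS L' (i+1) := by
    intro i hi
    have := dom (k + 1) (i+1) (by omega) (by omega)
    omega
  have h1 : L.sum ≤ L'.sum := by
    rw [sum_recon hsL hpL, sum_recon hsL' hpL', hk', ← hk]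
    have := Finset.sum_le_sum hsum
    omega
  rw [sparts_sum, sparts_sum] at h1
  exact h1

lemma sum_indicator {k j c : ℕ} (hjk : j ≤ k) :
    ∑ i ∈ Finset.range k, (if i < j then c else 0) = c * j := by
  rw [← Finset.sum_subset (Finset.range_subset_range.2 hjk)]
  · rw [Finset.sum_congr rfl (fun i hi => if_pos (Finset.mem_range.1 hi))]
    simp [mul_comm]
  · intro x _ hx
    rw [if_neg (by simpa using hx)]

lemma disj_of_isBasis {n : ℕ} (π : n.Partition) (hb : IsBasis π) :
    ∀ j, 1 ≤ j → j ≤ durfee (sparts π) →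
      ¬(mS (sparts π) (j+1) < mS (sparts π) j ∧ lS (sparts π) (j+1) < lS (sparts π) j) := by
  intro j hj1 hjk hcon
  set L := sparts π with hL
  set k := durfee L with hk
  have hsL : List.Pairwise (· ≥ ·) L := sparts_sorted π
  have hpL : ∀ x ∈ L, 0 < x := sparts_pos π
  set m := mS L with hm
  set l := lS L with hl
  have Hm : ∀ i, 1 ≤ i → m (i+1) ≤ m i := mS_anti hsL
  have Hl : ∀ i, 1 ≤ i → l (i+1) ≤ l i := lS_anti (L := L)
  -- parts of index ≤ j are at least 1
  have hmpos : ∀ i, 1 ≤ i → i ≤ j → 1 ≤ m i := by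
    intro i h1 h2
    have := antichain Hm i j h1 h2
    omega
  have hlpos : ∀ i, 1 ≤ i → i ≤ j → 1 ≤ l i := by
    intro i h1 h2
    have := antichain Hl i j h1 h2
    omega
  -- the reduced data
  set m' : ℕ → ℕ := fun i => if i ≤ j then m i - 1 else m i with hm'
  set l' : ℕ → ℕ := fun i => if i ≤ j then l i - 1 else l i with hl'
  have Hm' : ∀ i, 1 ≤ i → m' (i+1) ≤ m' i := by
    intro i h1
    simp only [hm']
    rcases Nat.lt_or_ge (i+1) j with h | h
    · rw [if_pos (by omega), if_pos (by omega)]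
      have := Hm i h1
      omega
    · rcases Nat.eq_or_lt_of_le h with h2 | h2
      · rw [if_pos (by omega), if_pos (by omega)]
        have := Hm i h1
        omega
      · rw [if_neg (by omega)]
        by_cases h3 : i ≤ j
        · have h4 : i = j := by omega
          rw [if_pos h3, h4]
          omega
        · rw [if_neg h3]
          exact Hm i h1
  have Hl' : ∀ i, 1 ≤ i → l' (i+1) ≤ l' i := by
    intro i h1
    simp only [hl']
    rcases Nat.lt_or_ge (i+1) j with h | h
    · rw [if_pos (by omega), if_pos (by omega)]
      have := Hl i h1
      omega
    · rcases Nat.eq_or_lt_of_le h with h2 | h2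
      · rw [if_pos (by omega), if_pos (by omega)]
        have := Hl i h1
        omega
      · rw [if_neg (by omega)]
        by_cases h3 : i ≤ j
        · have h4 : i = j := by omega
          rw [if_pos h3, h4]
          omega
        · rw [if_neg h3]
          exact Hl i h1
  have Hl0' : l' (k+1) = 0 := by
    simp only [hl']
    rw [if_neg (by omega)]
    exact lS_zero hsL (k+1) (by omega)
  -- the smaller partition with the same ranks
  set B := buildList k m' l' with hB
  have hBpos : ∀ x ∈ B, 0 < x := pos_buildList
  set π'' := ofList B hBpos with hπ''
  have hsB : sparts π'' = B := sparts_ofList B hBpos (sorted_buildList Hm')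
  have hranks : ranks (sparts π'') = ranks (sparts π) := by
    rw [hsB, hB, ranks_buildList Hm' Hl' Hl0']
    conv_rhs => rw [← hL, recon hsL hpL, ranks_buildList Hm Hl
      (lS_zero hsL (durfee L + 1) (by omega))]
    apply List.map_congr_left
    intro i hi
    have hik := List.mem_range.1 hi
    simp only [hm', hl']
    by_cases h : i + 1 ≤ j
    · rw [if_pos h, if_pos h]
      have h1 := hmpos (i+1) (by omega) h
      have h2 := hlpos (i+1) (by omega) h
      omega
    · rw [if_neg h, if_neg h]
  have hle := hb B.sum π'' hranks
  -- compute the two sums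
  have hsum : B.sum + 2 * j = n := by
    rw [hB, sum_buildList Hl' Hl0']
    have hn : n = k * k + ∑ i ∈ Finset.range k, (m (i+1) + l (i+1)) := by
      rw [← sparts_sum π, ← hL, sum_recon hsL hpL]
    have hterm : ∀ i ∈ Finset.range k,
        m' (i+1) + l' (i+1) + (if i < j then 2 else 0) = m (i+1) + l (i+1) := by
      intro i hi
      simp only [hm', hl']
      by_cases h : i + 1 ≤ j
      · rw [if_pos h, if_pos h, if_pos (by omega)]
        have h1 := hmpos (i+1) (by omega) h
        have h2 := hlpos (i+1) (by omega) h
        omega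
      · rw [if_neg h, if_neg h, if_neg (by omega)]
        omega
    have hsum2 : ∑ i ∈ Finset.range k, (m' (i+1) + l' (i+1)) +
        ∑ i ∈ Finset.range k, (if i < j then 2 else 0) =
        ∑ i ∈ Finset.range k, (m (i+1) + l (i+1)) := by
      rw [← Finset.sum_add_distrib]
      exact Finset.sum_congr rfl hterm
    rw [sum_indicator hjk] at hsum2
    omega
  omega

/-! congruence for buildList -/

lemma lowerList_congr {l l' : ℕ → ℕ} :
    ∀ {k : ℕ}, (∀ j, 1 ≤ j → j ≤ k + 1 → l j = l' j) → lowerList k l = lowerList k l' := by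
  intro k
  induction k with
  | zero => intro _; rfl
  | succ k ih =>
    intro h
    rw [lowerList, lowerList, h (k+1) (by omega) (by omega), h (k+1+1) (by omega) (by omega),
      ih (fun j h1 h2 => h j h1 (by omega))]

lemma buildList_congr {k : ℕ} {m m' l l' : ℕ → ℕ}
    (hm : ∀ j, 1 ≤ j → j ≤ k → m j = m' j)
    (hl : ∀ j, 1 ≤ j → j ≤ k + 1 → l j = l' j) :
    buildList k m l = buildList k m' l' := by
  rw [buildList, buildList, lowerList_congr hl]
  congr 1
  rw [topList, topList]
  apply List.map_congr_left
  intro i hi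
  have := List.mem_range.1 hi
  rw [hm (i+1) (by omega) (by omega)]

/-! the involution: swap rows of size 1 below the Durfee square with
columns of size 1 to its right -/

def swM (L : List ℕ) : ℕ → ℕ := fun j =>
  if j = 1 then mS L 2 + (lS L 1 - lS L 2) else mS L j

def swL (L : List ℕ) : ℕ → ℕ := fun j =>
  if j = 1 then lS L 2 + (mS L 1 - mS L 2) else lS L j

def swList (L : List ℕ) : List ℕ := buildList (durfee L) (swM L) (swL L)

section Swap

variable {L : List ℕ} (hs : List.Pairwise (· ≥ ·) L) (hpos : ∀ x ∈ L, 0 < x)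

include hs

lemma swM_anti : ∀ j, 1 ≤ j → swM L (j+1) ≤ swM L j := by
  intro j hj
  by_cases h : j = 1
  · subst h
    simp only [swM]
    rw [if_neg (by omega), if_pos trivial]
    norm_num
  · simp only [swM]
    rw [if_neg (by omega), if_neg h]
    exact mS_anti hs j hj

lemma swL_anti : ∀ j, 1 ≤ j → swL L (j+1) ≤ swL L j := by
  intro j hj
  by_cases h : j = 1
  · subst h
    simp only [swL]
    rw [if_neg (by omega), if_pos trivial]
    norm_num
  · simp only [swL]
    rw [if_neg (by omega), if_neg h]
    exact lS_anti (L := L) j hj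

lemma swM_zero : ∀ j, durfee L < j → swM L j = 0 := by
  intro j hj
  simp only [swM]
  by_cases h : j = 1
  · rw [if_pos h]
    have h1 : mS L 2 = 0 := mS_zero hs 2 (by omega)
    have h2 : lS L 1 = 0 := lS_zero hs 1 (by omega)
    omega
  · rw [if_neg h]
    exact mS_zero hs j hj

lemma swL_zero : ∀ j, durfee L < j → swL L j = 0 := by
  intro j hj
  simp only [swL]
  by_cases h : j = 1
  · rw [if_pos h]
    have h1 : lS L 2 = 0 := lS_zero hs 2 (by omega)
    have h2 : mS L 1 = 0 := mS_zero hs 1 (by omega)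
    omega
  · rw [if_neg h]
    exact lS_zero hs j hj

lemma sorted_swList : List.Pairwise (· ≥ ·) (swList L) :=
  sorted_buildList (swM_anti hs)

lemma durfee_swList : durfee (swList L) = durfee L :=
  durfee_buildList (swM_anti hs)

include hpos

lemma sum_swList : (swList L).sum = L.sum := by
  rw [swList, sum_buildList (swL_anti hs) (swL_zero hs _ (by omega)),
    sum_recon hs hpos]
  congr 1
  rcases Nat.eq_zero_or_pos (durfee L) with h0 | h0
  · rw [h0]
    simp
  · obtain ⟨k', hk'⟩ : ∃ k', durfee L = k' + 1 := ⟨durfee L - 1, by omega⟩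
    rw [hk', Finset.sum_range_succ', Finset.sum_range_succ']
    have htail : ∑ i ∈ Finset.range k', (swM L (i+1+1) + swL L (i+1+1)) =
        ∑ i ∈ Finset.range k', (mS L (i+1+1) + lS L (i+1+1)) := by
      apply Finset.sum_congr rfl
      intro i _
      simp only [swM, swL]
      rw [if_neg (by omega), if_neg (by omega)]
    have hhead : swM L (0+1) + swL L (0+1) = mS L (0+1) + lS L (0+1) := by
      simp only [swM, swL]
      rw [if_pos trivial, if_pos trivial]
      have h1 := lS_anti (L := L) 1 (by omega)
      have h2 := mS_anti hs 1 (by omega)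
      norm_num at h1 h2 ⊢
      omega
    rw [htail, hhead]

omit hs hpos

def swPart {n : ℕ} (π : n.Partition) : n.Partition :=
  ⟨((swList (sparts π) : List ℕ) : Multiset ℕ),
   fun hi => pos_buildList _ (by simpa [swList] using hi),
   by
    have h1 : ((swList (sparts π) : List ℕ) : Multiset ℕ).sum = (swList (sparts π)).sum :=
      Multiset.sum_coe _
    rw [h1, sum_swList (sparts_sorted π) (sparts_pos π), sparts_sum]⟩

lemma sparts_swPart {n : ℕ} (π : n.Partition) :
    sparts (swPart π) = swList (sparts π) := by
  have hperm : List.Perm (sparts (swPart π)) (swList (sparts π)) := by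
    rw [← Multiset.coe_eq_coe]
    exact Multiset.sort_eq _ _
  exact List.Perm.eq_of_pairwise' (sparts_sorted _) (sorted_swList (sparts_sorted π)) hperm

include hs

lemma mS_swList : ∀ j, 1 ≤ j → mS (swList L) j = swM L j := by
  intro j hj
  rcases Nat.lt_or_ge (durfee L) j with h | h
  · rw [mS_zero (sorted_swList hs) j (by rw [durfee_swList hs]; omega), swM_zero hs j h]
  · have hj1 : j - 1 < durfee L := by omega
    simp only [mS, durfee_swList hs]
    rw [swList, getD_buildList hj1]
    have hj2 : j - 1 + 1 = j := by omega
    rw [hj2]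
    omega

lemma lS_swList : ∀ j, 1 ≤ j → lS (swList L) j = swL L j := by
  intro j hj
  rcases Nat.lt_or_ge (durfee L) j with h | h
  · rw [lS_zero (sorted_swList hs) j (by rw [durfee_swList hs]; omega), swL_zero hs j h]
  · simp only [lS, durfee_swList hs]
    rw [swList, conj_buildList' (swL_anti hs) (swL_zero hs _ (by omega)) hj h]
    omega

include hpos

lemma swList_invol : swList (swList L) = L := by
  show buildList (durfee (swList L)) (swM (swList L)) (swL (swList L)) = L
  rw [durfee_swList hs]
  have hstep : buildList (durfee L) (swM (swList L)) (swL (swList L)) =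
      buildList (durfee L) (mS L) (lS L) := by
    apply buildList_congr
    · intro j h1 h2
      simp only [swM]
      by_cases h : j = 1
      · rw [if_pos h, h]
        rw [mS_swList hs 2 (by omega), lS_swList hs 1 (by omega), lS_swList hs 2 (by omega)]
        simp only [swM, swL]
        rw [if_neg (by omega), if_pos trivial, if_neg (by omega)]
        have h3 := mS_anti hs 1 (by omega)
        norm_num at h3 ⊢
        omega
      · rw [if_neg h, mS_swList hs j h1]
        simp only [swM]
        rw [if_neg h]
    · intro j h1 h2
      simp only [swL]
      by_cases h : j = 1
      · rw [if_pos h, h]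
        rw [lS_swList hs 2 (by omega), mS_swList hs 1 (by omega), mS_swList hs 2 (by omega)]
        simp only [swM, swL]
        rw [if_neg (by omega), if_pos trivial, if_neg (by omega)]
        have h3 := lS_anti (L := L) 1 (by omega)
        norm_num at h3 ⊢
        omega
      · rw [if_neg h, lS_swList hs j h1]
        simp only [swL]
        rw [if_neg h]
  rw [hstep, ← recon hs hpos]

omit hs hpos

lemma swPart_invol {n : ℕ} (π : n.Partition) : swPart (swPart π) = π := by
  apply Nat.Partition.ext
  show ((swList (sparts (swPart π)) : List ℕ) : Multiset ℕ) = π.parts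
  rw [sparts_swPart, swList_invol (sparts_sorted π) (sparts_pos π)]
  exact Multiset.sort_eq _ _

end Swap

/-! transport of the properties along the involution -/

section Transport

open scoped Classical

variable {n : ℕ} (π : n.Partition)

lemma durfee_pos (hn : 1 ≤ n) : 1 ≤ durfee (sparts π) := by
  set L := sparts π with hL
  have hs : List.Pairwise (· ≥ ·) L := sparts_sorted π
  have hpos : ∀ x ∈ L, 0 < x := sparts_pos π
  have hne : L ≠ [] := by
    intro h
    have := sparts_sum π
    rw [← hL, h] at this
    simp at this
    omega
  have hlen : 0 < L.length := List.length_pos_iff.2 hne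
  have h0 : 0 < L.getD 0 0 := by
    rw [List.getD_eq_getElem _ _ hlen]
    exact hpos _ (List.getElem_mem _)
  have := (durfee_iff hs hlen).1 (by omega)
  omega

lemma mS_swPart (j : ℕ) (hj : 1 ≤ j) :
    mS (sparts (swPart π)) j = swM (sparts π) j := by
  rw [sparts_swPart]
  exact mS_swList (sparts_sorted π) j hj

lemma lS_swPart (j : ℕ) (hj : 1 ≤ j) :
    lS (sparts (swPart π)) j = swL (sparts π) j := by
  rw [sparts_swPart]
  exact lS_swList (sparts_sorted π) j hj

lemma durfee_swPart : durfee (sparts (swPart π)) = durfee (sparts π) := by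
  rw [sparts_swPart]
  exact durfee_swList (sparts_sorted π)

lemma isBasis_swPart (hb : IsBasis π) : IsBasis (swPart π) := by
  have hdisj := disj_of_isBasis π hb
  apply isBasis_of_disj
  intro j hj1 hjk
  rw [durfee_swPart] at hjk
  rw [mS_swPart π (j+1) (by omega), mS_swPart π j hj1,
    lS_swPart π (j+1) (by omega), lS_swPart π j hj1]
  intro hcon
  by_cases h : j = 1
  · subst h
    simp only [swM, swL] at hcon
    rw [if_pos trivial, if_pos trivial, if_neg (by omega), if_neg (by omega)] at hcon
    have hd1 := hdisj 1 (by omega) hjk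
    norm_num at hcon hd1
    omega
  · simp only [swM, swL] at hcon
    rw [if_neg h, if_neg h, if_neg (by omega), if_neg (by omega)] at hcon
    exact hdisj j hj1 hjk hcon

lemma isComplete_swPart (hc : IsComplete π) : IsComplete (swPart π) := by
  have hs : List.Pairwise (· ≥ ·) (sparts π) := sparts_sorted π
  have hpos : ∀ x ∈ sparts π, 0 < x := sparts_pos π
  have hs' : List.Pairwise (· ≥ ·) (sparts (swPart π)) := sparts_sorted _
  have hpos' : ∀ x ∈ sparts (swPart π), 0 < x := sparts_pos _
  intro j hj1 hjlt
  have hk' : durfee (sparts (swPart π)) = durfee (sparts π) := durfee_swPart π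
  have hjk : j ≤ durfee (sparts π) := by omega
  -- translate the goal
  rw [mem_drop_iff hs' hpos', col_iff hs' hpos' hj1 (by omega), hk']
  rw [lS_swPart π (j+1) (by omega), lS_swPart π j hj1,
    mS_swPart π (j+1) (by omega), mS_swPart π j hj1]
  -- translate the hypothesis
  have hcj := hc j hj1 (by omega)
  rw [mem_drop_iff hs hpos, col_iff hs hpos hj1 hjk] at hcj
  by_cases h : j = 1
  · subst h
    simp only [swM, swL]
    rw [if_pos trivial, if_pos trivial, if_neg (by omega), if_neg (by omega)]
    have h2 := mS_anti hs 1 (by omega)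
    have h3 := lS_anti (L := sparts π) 1 (by omega)
    norm_num at *
    omega
  · simp only [swM, swL]
    rw [if_neg h, if_neg h, if_neg (by omega), if_neg (by omega)]
    omega

lemma sig_parity (hb : IsBasis π) (hc : IsComplete π) (hn : 2 ≤ n) :
    (sig (sparts (swPart π)) + sig (sparts π)) % 2 = 1 := by
  have hs : List.Pairwise (· ≥ ·) (sparts π) := sparts_sorted π
  have hpos : ∀ x ∈ sparts π, 0 < x := sparts_pos π
  have hs' : List.Pairwise (· ≥ ·) (sparts (swPart π)) := sparts_sorted _
  have hpos' : ∀ x ∈ sparts (swPart π), 0 < x := sparts_pos _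
  have hk1 : 1 ≤ durfee (sparts π) := durfee_pos π (by omega)
  have hk' : durfee (sparts (swPart π)) = durfee (sparts π) := durfee_swPart π
  -- exactly one of the two conditions at index 1
  have hone : (lS (sparts π) 2 < lS (sparts π) 1 ∨ mS (sparts π) 2 < mS (sparts π) 1) ∧
      ¬(lS (sparts π) 2 < lS (sparts π) 1 ∧ mS (sparts π) 2 < mS (sparts π) 1) := by
    constructor
    · rcases Nat.lt_or_ge (durfee (sparts π)) 2 with h2 | h2
      · have hkk : durfee (sparts π) = 1 := by omega
        have hsum := sum_recon hs hpos
        rw [sparts_sum, hkk] at hsum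
        simp [Finset.sum_range_succ] at hsum
        have z1 : mS (sparts π) 2 = 0 := mS_zero hs 2 (by omega)
        have z2 : lS (sparts π) 2 = 0 := lS_zero hs 2 (by omega)
        norm_num at hsum
        omega
      · have hcj := hc 1 (by omega) (by omega)
        rw [mem_drop_iff hs hpos, col_iff hs hpos (j := 1) (by omega) (by omega)] at hcj
        norm_num at hcj
        omega
    · intro hcon
      exact disj_of_isBasis π hb 1 (by omega) (by omega) ⟨hcon.2, hcon.1⟩
  -- signature formulas
  have hsig : sig (sparts π) = ((Finset.Icc 1 (durfee (sparts π))).filter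
      (fun j => lS (sparts π) (j+1) < lS (sparts π) j)).card := sig_eq hs hpos
  have hsig' : sig (sparts (swPart π)) = ((Finset.Icc 1 (durfee (sparts π))).filter
      (fun j => lS (sparts (swPart π)) (j+1) < lS (sparts (swPart π)) j)).card := by
    rw [sig_eq hs' hpos', hk']
  have hins : Finset.Icc 1 (durfee (sparts π)) = insert 1 (Finset.Icc 2 (durfee (sparts π))) := by
    apply Finset.ext
    intro a
    rw [Finset.mem_insert, Finset.mem_Icc, Finset.mem_Icc]
    omega
  have hnotmem : (1 : ℕ) ∉ Finset.Icc 2 (durfee (sparts π)) := by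
    rw [Finset.mem_Icc]; omega
  have htails : (Finset.Icc 2 (durfee (sparts π))).filter
        (fun j => lS (sparts (swPart π)) (j+1) < lS (sparts (swPart π)) j) =
      (Finset.Icc 2 (durfee (sparts π))).filter
        (fun j => lS (sparts π) (j+1) < lS (sparts π) j) := by
    apply Finset.filter_congr
    intro j hj
    have hj2 := (Finset.mem_Icc.1 hj).1
    rw [lS_swPart π (j+1) (by omega), lS_swPart π j (by omega)]
    simp only [swL]
    rw [if_neg (by omega), if_neg (by omega)]
  have hcard : ∀ (P : ℕ → Prop) [DecidablePred P],
      ((Finset.Icc 1 (durfee (sparts π))).filter P).card =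
        ((Finset.Icc 2 (durfee (sparts π))).filter P).card + (if P 1 then 1 else 0) := by
    intro P _
    rw [hins, Finset.filter_insert]
    by_cases h : P 1
    · rw [if_pos h, if_pos h, Finset.card_insert_of_notMem (fun hmem =>
        hnotmem (Finset.mem_filter.1 hmem).1)]
    · rw [if_neg h, if_neg h]
      omega
  rw [hsig, hsig', hcard, hcard, htails]
  have hc1 : lS (sparts (swPart π)) 2 < lS (sparts (swPart π)) 1 ↔
      mS (sparts π) 2 < mS (sparts π) 1 := by
    rw [lS_swPart π 2 (by omega), lS_swPart π 1 (by omega)]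
    simp only [swL]
    rw [if_pos trivial, if_neg (by omega)]
    have h2 : mS (sparts π) 2 ≤ mS (sparts π) 1 := mS_anti hs 1 (by omega)
    omega
  by_cases hA : lS (sparts π) 2 < lS (sparts π) 1
  · have hB : ¬ (mS (sparts π) 2 < mS (sparts π) 1) := fun h => hone.2 ⟨hA, h⟩
    rw [if_pos (show lS (sparts π) (1+1) < lS (sparts π) 1 from hA),
      if_neg (by rw [show ((1:ℕ)+1) = 2 from rfl, hc1]; exact hB)]
    omega
  · have hB : mS (sparts π) 2 < mS (sparts π) 1 := by
      rcases hone.1 with h | h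
      · exact absurd h hA
      · exact h
    rw [if_neg (show ¬ lS (sparts π) (1+1) < lS (sparts π) 1 from hA),
      if_pos (by rw [show ((1:ℕ)+1) = 2 from rfl, hc1]; exact hB)]
    omega

lemma sig_swap_even_iff (hb : IsBasis π) (hc : IsComplete π) (hn : 2 ≤ n) :
    (Odd (sig (sparts (swPart π))) ↔ Even (sig (sparts π))) := by
  have := sig_parity π hb hc hn
  rw [Nat.odd_iff, Nat.even_iff]
  omega

end Transport

theorem statement13 (n : ℕ) (hn : 2 ≤ n) :
    Nat.card {π : n.Partition // IsBasis π ∧ IsComplete π ∧ Even (sig (sparts π))} =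
      Nat.card {π : n.Partition // IsBasis π ∧ IsComplete π ∧ Odd (sig (sparts π))} ∧
    Even (bc n) := by
  classical
  have key : Nat.card {π : n.Partition // IsBasis π ∧ IsComplete π ∧ Even (sig (sparts π))} =
      Nat.card {π : n.Partition // IsBasis π ∧ IsComplete π ∧ Odd (sig (sparts π))} := by
    apply Nat.card_congr
    refine ⟨fun x => ⟨swPart x.1, isBasis_swPart x.1 x.2.1, isComplete_swPart x.1 x.2.2.1, ?_⟩,
            fun x => ⟨swPart x.1, isBasis_swPart x.1 x.2.1, isComplete_swPart x.1 x.2.2.1, ?_⟩,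
            fun x => ?_, fun x => ?_⟩
    · exact (sig_swap_even_iff x.1 x.2.1 x.2.2.1 hn).2 x.2.2.2
    · have hpar := sig_parity x.1 x.2.1 x.2.2.1 hn
      have hodd := x.2.2.2
      rw [Nat.odd_iff] at hodd
      rw [Nat.even_iff]
      omega
    · apply Subtype.ext
      exact swPart_invol x.1
    · apply Subtype.ext
      exact swPart_invol x.1
  refine ⟨key, ?_⟩
  have hsplit : bc n =
      Nat.card {π : n.Partition // IsBasis π ∧ IsComplete π ∧ Even (sig (sparts π))} +
      Nat.card {π : n.Partition // IsBasis π ∧ IsComplete π ∧ Odd (sig (sparts π))} := by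
    rw [bc, ← Nat.card_sum]
    apply Nat.card_congr
    refine ⟨fun x => if h : Even (sig (sparts x.1)) then Sum.inl ⟨x.1, x.2.1, x.2.2, h⟩
        else Sum.inr ⟨x.1, x.2.1, x.2.2, Nat.not_even_iff_odd.1 h⟩,
      Sum.elim (fun y => ⟨y.1, y.2.1, y.2.2.1⟩) (fun y => ⟨y.1, y.2.1, y.2.2.1⟩),
      fun x => ?_, fun x => ?_⟩
    · by_cases h : Even (sig (sparts x.1))
      · simp only [dif_pos h, Sum.elim_inl]
      · simp only [dif_neg h, Sum.elim_inr]
    · rcases x with y | y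
      · have h : Even (sig (sparts y.1)) := y.2.2.2
        simp only [Sum.elim_inl]; exact dif_pos h
      · have h : ¬ Even (sig (sparts y.1)) := Nat.not_even_iff_odd.2 y.2.2.2
        simp only [Sum.elim_inr]; exact dif_neg h
  rw [hsplit, key]
  exact ⟨_, rfl⟩

end BasisPartitions
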